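/- Let G be a bull-free graph with maximum degree at most k−1, C a clique in G, and S an independent set disjoint from C. Then the number of vertices of S having at least one neighbor in C is at most 2(k−1). -/
import Mathlib


/-- The bull: a triangle `0,1,2` with pendant vertices `3` (adjacent to `1`)
and `4` (adjacent to `2`). -/
def Bull : SimpleGraph (Fin 5) :=
  SimpleGraph.fromRel (fun a b =>
    (a, b) ∈ [((0 : Fin 5), (1 : Fin 5)), (0, 2), (1, 2), (1, 3), (2, 4)])

/-- In a bull-free graph of maximum degree at most `k-1`, at most `2(k-1)`
vertices of an independent set `S` disjoint from a clique `C` have a neighbor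
in `C`. -/
lemma bull_false {V : Type*} (G : SimpleGraph V) (hbf : IsEmpty (Bull ↪g G))
    (a b c x y : V)
    (hab : G.Adj a b) (hac : G.Adj a c) (hbc : G.Adj b c)
    (hxb : G.Adj x b) (hyc : G.Adj y c)
    (hxa : ¬ G.Adj x a) (hxc : ¬ G.Adj x c)
    (hya : ¬ G.Adj y a) (hyb : ¬ G.Adj y b)
    (hxy : ¬ G.Adj x y)
    (nxa : x ≠ a) (nxc : x ≠ c) (nya : y ≠ a) (nyb : y ≠ b) (nxy : x ≠ y) :
    False := by
  apply hbf.false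
  have nab : a ≠ b := hab.ne
  have nac : a ≠ c := hac.ne
  have nbc : b ≠ c := hbc.ne
  have nxb : x ≠ b := hxb.ne
  have nyc : y ≠ c := hyc.ne
  have hba := hab.symm
  have hca := hac.symm
  have hcb := hbc.symm
  have hbx := hxb.symm
  have hcy := hyc.symm
  have hax : ¬ G.Adj a x := fun h => hxa h.symm
  have hcx : ¬ G.Adj c x := fun h => hxc h.symm
  have hay : ¬ G.Adj a y := fun h => hya h.symm
  have hby : ¬ G.Adj b y := fun h => hyb h.symm
  have hyx : ¬ G.Adj y x := fun h => hxy h.symm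
  refine ⟨⟨![a,b,c,x,y], ?_⟩, ?_⟩
  · intro i j h
    fin_cases i <;> fin_cases j <;> simp_all
  · intro i j
    fin_cases i <;> fin_cases j <;> simp [Bull, G.irrefl] <;> tauto

theorem bull_free_clique_nbhd_bound {V : Type*} [Fintype V] [DecidableEq V]
    (G : SimpleGraph V) [DecidableRel G.Adj]
    (hbf : IsEmpty (Bull ↪g G))
    (k : ℕ) (hΔ : ∀ v : V, G.degree v ≤ k - 1)
    (C S : Finset V)
    (hC : ∀ a ∈ C, ∀ b ∈ C, a ≠ b → G.Adj a b)
    (hS : ∀ a ∈ S, ∀ b ∈ S, ¬ G.Adj a b)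
    (hdisj : Disjoint C S) :
    (S.filter (fun v => ∃ c ∈ C, G.Adj v c)).card ≤ 2 * (k - 1) := by
  classical
  set K := k - 1 with hK
  set N := S.filter (fun v => ∃ c ∈ C, G.Adj v c) with hNdef
  have hNS : N ⊆ S := Finset.filter_subset _ _
  set A : V → Finset V := fun s => C.filter (fun c => G.Adj s c) with hAdef
  have hAmem : ∀ s c, c ∈ A s ↔ c ∈ C ∧ G.Adj s c := by
    intro s c; simp [hAdef]
  have hAC : ∀ s, A s ⊆ C := fun s => Finset.filter_subset _ _
  have hAne : ∀ s ∈ N, (A s).Nonempty := by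
    intro s hs
    obtain ⟨c, hc, hadj⟩ := (Finset.mem_filter.mp hs).2
    exact ⟨c, (hAmem s c).mpr ⟨hc, hadj⟩⟩
  have hdSC : ∀ {s c}, s ∈ S → c ∈ C → s ≠ c := by
    intro s c hs hc h
    exact (Finset.disjoint_left.mp hdisj hc) (h ▸ hs)
  have hdeg : ∀ (c : V) (T : Finset V), (∀ s ∈ T, G.Adj s c) → T.card ≤ K := by
    intro c T h
    calc T.card ≤ G.degree c := by
          rw [← SimpleGraph.card_neighborFinset_eq_degree]
          exact Finset.card_le_card fun s hs =>
            (SimpleGraph.mem_neighborFinset G c s).mpr ((h s hs).symm)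
      _ ≤ K := hΔ c
  -- key bull argument
  have key : ∀ {s t a b c : V}, s ∈ S → t ∈ S → s ≠ t → b ∈ C → c ∈ C →
      G.Adj a b → G.Adj a c → G.Adj s b → G.Adj t c → ¬ G.Adj s c → ¬ G.Adj t b →
      ¬ G.Adj s a → ¬ G.Adj t a → s ≠ a → t ≠ a → False := by
    intro s t a b c hsS htS hst hbC hcC hab hac hsb htc hsc htb hsa hta hsa' hta'
    have hbc' : b ≠ c := by rintro rfl; exact hsc hsb
    have hbc : G.Adj b c := hC b hbC c hcC hbc'
    exact bull_false G hbf a b c s t hab hac hbc hsb htc hsa hsc hta htb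
      (hS s hsS t htS) hsa' (hdSC hsS hcC) hta' (hdSC htS hbC) hst
  have comp1 : ∀ s ∈ N, ∀ t ∈ N, s ≠ t → A s ∪ A t ≠ C → (A s ⊆ A t ∨ A t ⊆ A s) := by
    intro s hs t ht hst hne
    by_contra h
    push_neg at h
    obtain ⟨b, hbs, hbt⟩ := Finset.not_subset.mp h.1
    obtain ⟨c, hct, hcs⟩ := Finset.not_subset.mp h.2
    have hsub : A s ∪ A t ⊆ C := Finset.union_subset (hAC s) (hAC t)
    obtain ⟨a, haC, ha⟩ := Finset.exists_of_ssubset (hsub.ssubset_of_ne hne)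
    have haAs : a ∉ A s := fun h' => ha (Finset.mem_union_left _ h')
    have haAt : a ∉ A t := fun h' => ha (Finset.mem_union_right _ h')
    have hbC := hAC s hbs
    have hcC := hAC t hct
    have hab : G.Adj a b := hC a haC b hbC (by rintro rfl; exact haAs hbs)
    have hac : G.Adj a c := hC a haC c hcC (by rintro rfl; exact haAt hct)
    exact key (hNS hs) (hNS ht) hst hbC hcC hab hac
      ((hAmem s b).mp hbs).2 ((hAmem t c).mp hct).2
      (fun h' => hcs ((hAmem s c).mpr ⟨hcC, h'⟩))
      (fun h' => hbt ((hAmem t b).mpr ⟨hbC, h'⟩))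
      (fun h' => haAs ((hAmem s a).mpr ⟨haC, h'⟩))
      (fun h' => haAt ((hAmem t a).mpr ⟨haC, h'⟩))
      (hdSC (hNS hs) haC) (hdSC (hNS ht) haC)
  -- common neighbor from a chain
  have chain_common : ∀ T : Finset V, T ⊆ N → T.Nonempty →
      (∀ s ∈ T, ∀ t ∈ T, s ≠ t → (A s ⊆ A t ∨ A t ⊆ A s)) →
      ∃ c₀, ∀ s ∈ T, G.Adj s c₀ := by
    intro T hTN hTne hcomp
    obtain ⟨m, hmT, hmmin⟩ := T.exists_min_image (fun s => (A s).card) hTne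
    obtain ⟨c₀, hc₀⟩ := hAne m (hTN hmT)
    refine ⟨c₀, fun s hsT => ?_⟩
    have : c₀ ∈ A s := by
      rcases eq_or_ne s m with rfl | hne
      · exact hc₀
      · rcases hcomp s hsT m hmT hne with h | h
        · rwa [← Finset.eq_of_subset_of_card_le h (hmmin s hsT)] at hc₀
        · exact h hc₀
    exact ((hAmem s c₀).mp this).2
  by_cases hK0 : K = 0
  · have : N = ∅ := by
      rw [Finset.eq_empty_iff_forall_notMem]
      intro s hs
      obtain ⟨c, hc⟩ := hAne s hs
      have := hdeg c {s} (by simpa using ((hAmem s c).mp hc).2)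
      simp [hK0] at this
    simp [this]
  · have hK1 : 1 ≤ K := Nat.one_le_iff_ne_zero.mpr hK0
    by_cases hdom : ∃ m ∈ N, A m = C
    · -- a vertex m of N complete to C
      obtain ⟨m, hmN, hAm⟩ := hdom
      have hmadj : ∀ d ∈ C, G.Adj m d := by
        intro d hd
        exact ((hAmem m d).mp (hAm ▸ hd)).2
      have comp2 : ∀ s ∈ N \ {m}, ∀ t ∈ N \ {m}, s ≠ t → (A s ⊆ A t ∨ A t ⊆ A s) := by
        intro s hs t ht hst
        rw [Finset.mem_sdiff, Finset.mem_singleton] at hs ht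
        by_contra h
        push_neg at h
        obtain ⟨b, hbs, hbt⟩ := Finset.not_subset.mp h.1
        obtain ⟨c, hct, hcs⟩ := Finset.not_subset.mp h.2
        have hbC := hAC s hbs
        have hcC := hAC t hct
        exact key (hNS hs.1) (hNS ht.1) hst hbC hcC (hmadj b hbC) (hmadj c hcC)
          ((hAmem s b).mp hbs).2 ((hAmem t c).mp hct).2
          (fun h' => hcs ((hAmem s c).mpr ⟨hcC, h'⟩))
          (fun h' => hbt ((hAmem t b).mpr ⟨hbC, h'⟩))
          (hS s (hNS hs.1) m (hNS hmN)) (hS t (hNS ht.1) m (hNS hmN))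
          hs.2 ht.2
      rcases (N \ {m}).eq_empty_or_nonempty with he | hne
      · have : N ⊆ {m} := by
          intro s hs
          by_contra h
          exact Finset.eq_empty_iff_forall_notMem.mp he s (Finset.mem_sdiff.mpr ⟨hs, h⟩)
        have := Finset.card_le_card this
        simp only [Finset.card_singleton] at this
        omega
      · obtain ⟨c₀, hadj⟩ := chain_common (N \ {m}) (Finset.sdiff_subset) hne comp2
        have h1 : (N \ {m}).card ≤ K := hdeg c₀ _ hadj
        have h2 : N.card ≤ (N \ {m}).card + 1 := by
          have : N ⊆ (N \ {m}) ∪ {m} := by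
            intro s hs
            by_cases h : s = m
            · subst h; exact Finset.mem_union_right _ (Finset.mem_singleton_self s)
            · exact Finset.mem_union_left _ (Finset.mem_sdiff.mpr ⟨hs, by simpa using h⟩)
          calc N.card ≤ ((N \ {m}) ∪ {m}).card := Finset.card_le_card this
            _ ≤ (N \ {m}).card + ({m} : Finset V).card := Finset.card_union_le _ _
            _ = (N \ {m}).card + 1 := by simp
        omega
    · push_neg at hdom
      rcases N.eq_empty_or_nonempty with hNe | hNe
      · simp [hNe]
      · -- choose a maximum-cardinality S₁ with the pairwise non-covering property
        set Q : Finset V → Prop := fun T => ∀ s ∈ T, ∀ t ∈ T, s ≠ t → A s ∪ A t ≠ C with hQ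
        obtain ⟨S₁, hS₁mem, hS₁max⟩ :=
          Finset.exists_max_image ((N.powerset).filter Q) Finset.card
            ⟨∅, by simp [hQ]⟩
        rw [Finset.mem_filter, Finset.mem_powerset] at hS₁mem
        obtain ⟨hS₁N, hS₁Q⟩ := hS₁mem
        have hS₁comp : ∀ s ∈ S₁, ∀ t ∈ S₁, s ≠ t → (A s ⊆ A t ∨ A t ⊆ A s) := by
          intro s hs t ht hst
          exact comp1 s (hS₁N hs) t (hS₁N ht) hst (hS₁Q s hs t ht hst)
        have hS₁ne : S₁.Nonempty := by
          obtain ⟨s, hs⟩ := hNe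
          have : ({s} : Finset V) ∈ (N.powerset).filter Q := by
            rw [Finset.mem_filter, Finset.mem_powerset]
            refine ⟨Finset.singleton_subset_iff.mpr hs, ?_⟩
            intro u hu v hv huv
            rw [Finset.mem_singleton] at hu hv
            exact absurd (hu.trans hv.symm) huv
          have := hS₁max _ this
          rw [Finset.card_singleton] at this
          exact Finset.card_pos.mp (by omega)
        -- maximal element of the chain
        obtain ⟨m, hmS₁, hmmax⟩ := S₁.exists_max_image (fun s => (A s).card) hS₁ne
        have hAsub : ∀ s ∈ S₁, A s ⊆ A m := by
          intro s hs
          rcases eq_or_ne s m with rfl | hne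
          · exact Finset.Subset.refl _
          · rcases hS₁comp s hs m hmS₁ hne with h | h
            · exact h
            · rw [Finset.eq_of_subset_of_card_le h (hmmax s hs)]
        have hAmC : A m ≠ C := hdom m (hS₁N hmS₁)
        obtain ⟨c₀, hc₀C, hc₀m⟩ := Finset.exists_of_ssubset ((hAC m).ssubset_of_ne hAmC)
        -- every vertex outside S₁ is adjacent to c₀
        have hout : ∀ s ∈ N \ S₁, G.Adj s c₀ := by
          intro s hs
          rw [Finset.mem_sdiff] at hs
          have hnotQ : ¬ Q (insert s S₁) := by
            intro hQ'
            have hmem : insert s S₁ ∈ (N.powerset).filter Q := by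
              rw [Finset.mem_filter, Finset.mem_powerset]
              exact ⟨Finset.insert_subset hs.1 hS₁N, hQ'⟩
            have := hS₁max _ hmem
            rw [Finset.card_insert_of_notMem hs.2] at this
            omega
          obtain ⟨u, hu, v, hv, huv, hcov⟩ :
              ∃ u ∈ insert s S₁, ∃ v ∈ insert s S₁, u ≠ v ∧ A u ∪ A v = C := by
            by_contra hcon
            push_neg at hcon
            exact hnotQ fun u hu v hv huv => hcon u hu v hv huv
          rw [Finset.mem_insert] at hu hv
          -- find t ∈ S₁ with A s ∪ A t = C
          have : ∃ t ∈ S₁, A s ∪ A t = C := by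
            rcases hu with rfl | hu
            · rcases hv with rfl | hv
              · exact absurd rfl huv
              · exact ⟨v, hv, hcov⟩
            · rcases hv with rfl | hv
              · exact ⟨u, hu, by rwa [Finset.union_comm]⟩
              · exact absurd hcov (hS₁Q u hu v hv huv)
          obtain ⟨t, htS₁, hcov'⟩ := this
          have : c₀ ∈ A s ∪ A t := hcov' ▸ hc₀C
          rw [Finset.mem_union] at this
          rcases this with h | h
          · exact ((hAmem s c₀).mp h).2
          · exact absurd (hAsub t htS₁ h) hc₀m
        obtain ⟨c₁, hadj₁⟩ := chain_common S₁ hS₁N hS₁ne hS₁comp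
        have h1 : S₁.card ≤ K := hdeg c₁ _ hadj₁
        have h2 : (N \ S₁).card ≤ K := hdeg c₀ _ hout
        have h3 : (N \ S₁).card + S₁.card = N.card := Finset.card_sdiff_add_card_eq_card hS₁N
        omega
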